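/- Let $H \subseteq G$ be a subgraph of a directed acyclic graph $G$ on $[n]$. The multigraph $H_{comp}$ is loopless if and only if $H$ is the disjoint union of induced subgraphs of $G$: there is a partition $\mathcal P$ of $[n]$ such that $E(H) = \{(i,j) \in E(G) : i, j \text{ lie in the same part of } \mathcal P\}$. -/

import Mathlib

/-- Undirected adjacency underlying the subgraph `H`. -/
def UAdj {n : ℕ} (E : Set (Fin n × Fin n)) (u v : Fin n) : Prop :=
  (u, v) ∈ E ∨ (v, u) ∈ E

/-- `u` and `v` lie in the same connected component of the underlying undirected graph. -/
def SameComp {n : ℕ} (E : Set (Fin n × Fin n)) : Fin n → Fin n → Prop :=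
  Relation.ReflTransGen (UAdj E)

/-- `H_comp` is loopless iff `H` is a disjoint union of induced subgraphs of `G`, i.e. there
is a partition (equivalence relation) of the vertices with `E(H)` the edges of `G` inside parts. -/
lemma sameComp_imp {n : ℕ} {E : Set (Fin n × Fin n)} {r : Fin n → Fin n → Prop}
    (hr : Equivalence r) (h : ∀ e ∈ E, r e.1 e.2) {a b : Fin n}
    (hsc : SameComp E a b) : r a b := by
  induction hsc with
  | refl => exact hr.refl _
  | tail _ hadj ih =>
    rcases hadj with h' | h'
    · exact hr.trans ih (h _ h')
    · exact hr.trans ih (hr.symm (h _ h'))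

theorem stmt7 (n : ℕ) (E EH : Set (Fin n × Fin n))
    (hE : ∀ e ∈ E, e.1 < e.2) (hH : EH ⊆ E) :
    (∀ e ∈ E, SameComp EH e.1 e.2 → e ∈ EH) ↔
      ∃ r : Fin n → Fin n → Prop, Equivalence r ∧ EH = {e ∈ E | r e.1 e.2} := by
  have hsymm : Symmetric (SameComp EH) :=
    (@Relation.ReflTransGen.stdSymm _ (UAdj EH) ⟨fun u v h => h.symm⟩).symm
  constructor
  · intro h
    refine ⟨SameComp EH, ⟨fun _ => Relation.ReflTransGen.refl, @hsymm,
      fun h1 h2 => h1.trans h2⟩, ?_⟩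
    ext e
    constructor
    · intro he
      exact ⟨hH he, Relation.ReflTransGen.single (Or.inl he)⟩
    · intro ⟨heE, hr⟩
      exact h e heE hr
  · rintro ⟨r, hr, rfl⟩ e heE hsc
    exact ⟨heE, sameComp_imp hr (fun e he => he.2) hsc⟩
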